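/- Let T be a rooted tree, let Q_1, …, Q_s (s ≥ 2) be a finite sequence of vertices, and let Q be their least common ancestor. Then there exists an index i ∈ {1, …, s-1} such that the least common ancestor of Q_i and Q_{i+1} equals Q. -/
import Mathlib


/-- Longest common prefix of two lists.  Modelling a rooted tree by identifying each
vertex with the list of edge-labels on its root-path, `lcp` computes the least
common ancestor of two vertices and the prefix order is the ancestor order. -/
def lcp {α : Type*} [DecidableEq α] : List α → List α → List α
  | a :: as, b :: bs => if a = b then a :: lcp as bs else []
  | _, _ => []

lemma lcp_prefix_left {α : Type*} [DecidableEq α] :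
    ∀ a b : List α, lcp a b <+: a
  | [], b => by cases b <;> simp [lcp]
  | _ :: _, [] => by simp [lcp]
  | a :: as, b :: bs => by
    by_cases h : a = b
    · simpa [lcp, h, List.cons_prefix_cons] using lcp_prefix_left as bs
    · simp [lcp, h]

lemma lcp_prefix_right {α : Type*} [DecidableEq α] :
    ∀ a b : List α, lcp a b <+: b
  | [], b => by cases b <;> simp [lcp]
  | _ :: _, [] => by simp [lcp]
  | a :: as, b :: bs => by
    by_cases h : a = b
    · subst h
      simpa [lcp, List.cons_prefix_cons] using lcp_prefix_right as bs
    · simp [lcp, h]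

lemma prefix_lcp {α : Type*} [DecidableEq α] :
    ∀ (p a b : List α), p <+: a → p <+: b → p <+: lcp a b
  | [], _, _, _, _ => List.nil_prefix
  | x :: p, _, _, ⟨ta, rfl⟩, ⟨tb, rfl⟩ => by
    simp only [List.cons_append, lcp, if_pos rfl, List.cons_prefix_cons, true_and]
    simpa using prefix_lcp p _ _ ⟨ta, rfl⟩ ⟨tb, rfl⟩

theorem exists_adjacent_lca {α : Type*} [DecidableEq α] (s : ℕ) (hs : 2 ≤ s)
    (Q : ℕ → List α) (L : ℕ → List α) (hL0 : L 0 = Q 0)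
    (hLs : ∀ i, L (i + 1) = lcp (L i) (Q (i + 1))) :
    ∃ i, i + 1 < s ∧ lcp (Q i) (Q (i + 1)) = L (s - 1) := by
  by_contra hcon
  push_neg at hcon
  set n := (L (s - 1)).length with hn
  -- L is decreasing in the prefix order
  have hLmono : ∀ j i, j ≤ i → L i <+: L j := by
    intro j i hji
    induction i with
    | zero => simp [Nat.le_zero.mp hji]
    | succ k ih =>
      rcases Nat.lt_or_ge j (k + 1) with h | h
      · exact ((hLs k ▸ lcp_prefix_left (L k) (Q (k + 1)))).trans
          (ih (Nat.lt_succ_iff.mp h))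
      · have : j = k + 1 := le_antisymm hji h
        subst this; exact List.prefix_refl _
  have hLQ : ∀ i, L i <+: Q i := by
    intro i
    cases i with
    | zero => simp [hL0]
    | succ k => exact hLs k ▸ lcp_prefix_right _ _
  have hLsQ : ∀ i, i ≤ s - 1 → L (s - 1) <+: Q i := fun i hi =>
    (hLmono i (s - 1) hi).trans (hLQ i)
  -- each adjacent lcp has L (s-1) as a proper prefix
  have hadj : ∀ i, i + 1 < s → n < (lcp (Q i) (Q (i + 1))).length := by
    intro i hi
    have h1 : L (s - 1) <+: lcp (Q i) (Q (i + 1)) :=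
      prefix_lcp _ _ _ (hLsQ i (by omega)) (hLsQ (i + 1) (by omega))
    have h2 := hcon i hi
    have := h1.length_le
    rcases lt_or_eq_of_le this with h | h
    · exact h
    · exact absurd (h1.eq_of_length h).symm h2
  have h01 : 0 + 1 < s := by omega
  have hQ0len : n + 1 ≤ (Q 0).length := by
    have h1 := (lcp_prefix_left (Q 0) (Q (0 + 1))).length_le
    have h2 := hadj 0 h01
    omega
  set T := (Q 0).take (n + 1) with hT
  have hTlen : T.length = n + 1 := by
    simp [hT, Nat.min_eq_left hQ0len]
  -- T is a prefix of every Q i, i ≤ s - 1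
  have hTQ : ∀ i, i ≤ s - 1 → T <+: Q i := by
    intro i hi
    induction i with
    | zero => exact List.take_prefix _ _
    | succ k ih =>
      have hk : k ≤ s - 1 := by omega
      have hprev : T <+: Q k := ih hk
      have hlen : T.length ≤ (lcp (Q k) (Q (k + 1))).length := by
        have := hadj k (by omega); omega
      have : T <+: lcp (Q k) (Q (k + 1)) :=
        List.prefix_of_prefix_length_le hprev (lcp_prefix_left _ _) hlen
      exact this.trans (lcp_prefix_right _ _)
  -- hence T is a prefix of every L j, j ≤ s - 1
  have hTL : ∀ j, j ≤ s - 1 → T <+: L j := by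
    intro j hj
    induction j with
    | zero => rw [hL0]; exact hTQ 0 (by omega)
    | succ k ih =>
      rw [hLs k]
      exact prefix_lcp _ _ _ (ih (by omega)) (hTQ (k + 1) hj)
  have := (hTL (s - 1) le_rfl).length_le
  omega
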